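/- With X, the basis {e_k; f_k}, Q_n, and Φ_r as above (‖R_n‖ = 1 for all n), one has Q_n Φ_r(x) = Φ_r(Q_n x) for every x ∈ X and every n ∈ ℕ. -/
import Mathlib


open Filter Finset Topology

/-- The tail projection `Q_{n+1} = I - P_n` associated to a Schauder basis system,
where `P_n x = ∑_{k<n} f_k(x) e_k`.  Thus `tailProj f e n` is the paper's `Q_{n+1}`
and also its `R_n`. -/
noncomputable def tailProj {X : Type*} [NormedAddCommGroup X] [NormedSpace ℝ X]
    (f : ℕ → X →L[ℝ] ℝ) (e : ℕ → X) (n : ℕ) : X →L[ℝ] X :=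
  ContinuousLinearMap.id ℝ X - ∑ k ∈ Finset.range n, (f k).smulRight (e k)

/-- The piecewise-linear cutoff function `φ_r`: equal to `1` on `[-r, r]`,
`0` outside `(-2r, 2r)`, and `2 - |t|/r` in between. -/
noncomputable def phi (r t : ℝ) : ℝ :=
  if |t| ≤ r then 1 else if |t| ≤ 2 * r then 2 - |t| / r else 0

section Aux
variable {X : Type*} [NormedAddCommGroup X] [NormedSpace ℝ X]
  (f : ℕ → X →L[ℝ] ℝ) (e : ℕ → X)

lemma tailProj_apply (n : ℕ) (x : X) :
    tailProj f e n x = x - ∑ k ∈ Finset.range n, f k x • e k := by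
  simp [tailProj]

lemma f_tailProj (hbi : ∀ k j, f k (e j) = if k = j then (1 : ℝ) else 0)
    (n k : ℕ) (x : X) :
    f k (tailProj f e n x) = if n ≤ k then f k x else 0 := by
  simp only [tailProj_apply, map_sub, map_sum, map_smul, hbi, smul_eq_mul,
    mul_ite, mul_one, mul_zero, Finset.sum_ite_eq, Finset.mem_range]
  by_cases h : k < n
  · simp [h, Nat.not_le.2 h]
  · simp [h, Nat.le_of_not_lt h]

lemma tailProj_e (hbi : ∀ k j, f k (e j) = if k = j then (1 : ℝ) else 0)
    (n k : ℕ) :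
    tailProj f e n (e k) = if k < n then 0 else e k := by
  simp only [tailProj_apply, hbi, ite_smul, one_smul, zero_smul]
  rw [Finset.sum_ite_eq' (Finset.range n) k e]
  by_cases h : k < n <;> simp [h]

lemma tailProj_comp (hbi : ∀ k j, f k (e j) = if k = j then (1 : ℝ) else 0)
    {n m : ℕ} (h : n ≤ m) (x : X) :
    tailProj f e m (tailProj f e n x) = tailProj f e m x := by
  rw [tailProj_apply f e m (tailProj f e n x)]
  simp only [f_tailProj f e hbi n _ x, ite_smul, zero_smul]
  rw [tailProj_apply f e n x, tailProj_apply f e m x]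
  rw [Finset.sum_ite, Finset.sum_const_zero, add_zero]
  have hfil : (Finset.range m).filter (fun k => n ≤ k) = Finset.Ico n m := by
    ext k; simp [Finset.mem_filter, Finset.mem_Ico, and_comm]
  rw [hfil, sub_sub, Finset.range_eq_Ico, Finset.sum_Ico_consecutive _ (Nat.zero_le n) h,
    ← Finset.range_eq_Ico]

end Aux

/-- `Q_n Φ_r(x) = Φ_r(Q_n x)` for every `x ∈ X` and every `n`. -/
theorem Phi_commutes_with_tails
    {X : Type*} [NormedAddCommGroup X] [NormedSpace ℝ X] [CompleteSpace X]
    (e : ℕ → X) (f : ℕ → X →L[ℝ] ℝ)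
    (hexp : ∀ x : X, Tendsto (fun n => ∑ k ∈ Finset.range n, f k x • e k) atTop (𝓝 x))
    (hbi : ∀ k j, f k (e j) = if k = j then (1 : ℝ) else 0)
    (hR : ∀ n, 1 ≤ n → ‖tailProj f e n‖ = 1)
    (r : ℝ) (hr : 0 < r) (Φ : X → X)
    (hΦ : ∀ x : X, Tendsto
      (fun n => ∑ k ∈ Finset.range n, phi r ‖tailProj f e k x‖ • (f k x • e k))
      atTop (𝓝 (Φ x)))
    (x : X) (n : ℕ) :
    tailProj f e n (Φ x) = Φ (tailProj f e n x) := by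
  have key : ∀ m, tailProj f e n
      (∑ k ∈ Finset.range m, phi r ‖tailProj f e k x‖ • (f k x • e k))
      = ∑ k ∈ Finset.range m,
          phi r ‖tailProj f e k (tailProj f e n x)‖ • (f k (tailProj f e n x) • e k) := by
    intro m
    rw [map_sum]
    refine Finset.sum_congr rfl fun k _ => ?_
    rw [map_smul, map_smul, tailProj_e f e hbi n k, f_tailProj f e hbi n k x]
    by_cases h : k < n
    · simp [h, Nat.not_le.2 h]
    · rw [if_neg h, if_pos (Nat.le_of_not_lt h),
        tailProj_comp f e hbi (Nat.le_of_not_lt h)]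
  have h1 : Tendsto (fun m => tailProj f e n
      (∑ k ∈ Finset.range m, phi r ‖tailProj f e k x‖ • (f k x • e k)))
      atTop (𝓝 (tailProj f e n (Φ x))) :=
    ((tailProj f e n).continuous.tendsto _).comp (hΦ x)
  simp only [key] at h1
  exact tendsto_nhds_unique h1 (hΦ (tailProj f e n x))
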